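/- arXiv:1702.00645 — 2 statements merged into one kernel-verified Lean document; each statement's English description precedes it below -/
import Mathlib

section
/- If X is a real random variable with H([X]_1) < ∞, then the lower information dimension satisfies 0 ≤ liminf_{m→∞} H([X]_m)/log m ≤ limsup_{m→∞} H([X]_m)/log m ≤ 1. -/
open MeasureTheory ProbabilityTheory Real Filter Topology
open scoped ENNReal NNReal Classical

/-- Uniform quantization of `x` with step size `1/m`: `[x]_m = ⌊m x⌋ / m`. -/
noncomputable def qz (m : ℕ) (x : ℝ) : ℝ := ⌊(m : ℝ) * x⌋ / m

/-- Shannon entropy (in nats, extended-real-valued) of a measure, computed over atoms. -/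
noncomputable def pentropy {E : Type*} [MeasurableSpace E] (ν : Measure E) : ℝ≥0∞ :=
  ∑' x : E, ENNReal.ofReal (Real.negMulLog ((ν {x}).toReal))

/-- Conditional Shannon entropy of `X : Ω → E` given an arbitrary random variable `W`,
via the regular conditional distribution. -/
noncomputable def centropy {Ω β E : Type*} [MeasurableSpace Ω] [MeasurableSpace β]
    [MeasurableSpace E] [StandardBorelSpace E] [Nonempty E]
    (μ : Measure Ω) [IsFiniteMeasure μ] (X : Ω → E) (W : Ω → β) : ℝ≥0∞ :=
  ∫⁻ b, pentropy ((ProbabilityTheory.condDistrib X W μ) b) ∂(μ.map W)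

/-- A process `{X_t, t ∈ ℤ}` is stationary if all its shifts have the same law. -/
def Stationary {Ω : Type*} [MeasurableSpace Ω] (μ : Measure Ω) (X : ℤ → Ω → ℝ) : Prop :=
  ∀ n : ℤ, μ.map (fun ω => fun t : ℤ => X (t + n) ω) = μ.map (fun ω => fun t : ℤ => X t ω)

/-- Entropy rate of the process quantized with step `1/m`:
`H̄([X]_m) = lim_k H([X_1]_m,…,[X_k]_m)/k` (the limit exists for stationary processes;
we express it as a `liminf`). -/
noncomputable def entRate {Ω : Type*} [MeasurableSpace Ω] (μ : Measure Ω)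
    (X : ℤ → Ω → ℝ) (m : ℕ) : ℝ≥0∞ :=
  Filter.atTop.liminf (fun k : ℕ =>
    pentropy (μ.map (fun ω => fun t : Fin k => qz m (X ((t : ℕ) + 1 : ℤ) ω))) / (k : ℝ≥0∞))

/-- Mutual information of a joint law, as the KL divergence from the product of marginals. -/
noncomputable def mutualInfo {α β : Type*} [MeasurableSpace α] [MeasurableSpace β]
    (ν : Measure (α × β)) : ℝ≥0∞ :=
  if ν ≪ (ν.map Prod.fst).prod (ν.map Prod.snd) ∧
      Integrable (fun p => Real.log ((ν.rnDeriv ((ν.map Prod.fst).prod (ν.map Prod.snd)) p).toReal)) ν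
  then ENNReal.ofReal
      (∫ p, Real.log ((ν.rnDeriv ((ν.map Prod.fst).prod (ν.map Prod.snd)) p).toReal) ∂ν)
  else ⊤

/-- Rate-distortion function of a `k`-dimensional source under squared-error distortion. -/
noncomputable def RD {k : ℕ} (μX : Measure (Fin k → ℝ)) (D : ℝ) : ℝ≥0∞ :=
  ⨅ (ν : Measure ((Fin k → ℝ) × (Fin k → ℝ))) (_ : IsProbabilityMeasure ν)
    (_ : ν.map Prod.fst = μX)
    (_ : ∫ p, ∑ l, (p.2 l - p.1 l) ^ 2 ∂ν ≤ D), mutualInfo ν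

section Helpers

variable {Ω : Type*} [MeasurableSpace Ω] (μ : Measure Ω) [IsProbabilityMeasure μ]
  (X : Ω → ℝ) (hX : Measurable X)

lemma qz_measurable (m : ℕ) : Measurable (qz m) := by
  unfold qz
  have h1 : Measurable fun x : ℝ => (⌊(m : ℝ) * x⌋ : ℝ) := by
    have : Measurable fun x : ℝ => ⌊(m : ℝ) * x⌋ := (measurable_const.mul measurable_id).floor
    exact measurable_from_top.comp this
  exact h1.div_const _

lemma floorset_measurable (m : ℕ) (k : ℤ) (hX : Measurable X) :
    MeasurableSet {ω | ⌊(m : ℝ) * X ω⌋ = k} :=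
  (measurable_const.mul hX).floor (measurableSet_singleton k)

/-- Lemma A: entropy of the quantized variable as a sum over ℤ. -/
lemma pentropy_map_eq (m : ℕ) (hm : 1 ≤ m) (hX : Measurable X) :
    pentropy (μ.map (fun ω => qz m (X ω))) =
      ∑' k : ℤ, ENNReal.ofReal (Real.negMulLog ((μ {ω | ⌊(m : ℝ) * X ω⌋ = k}).toReal)) := by
  have hmR : (0 : ℝ) < m := by exact_mod_cast hm
  have hmeas : Measurable (fun ω => qz m (X ω)) := (qz_measurable m).comp hX
  have hmap : ∀ x : ℝ, (μ.map (fun ω => qz m (X ω))) {x} = μ {ω | qz m (X ω) = x} := by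
    intro x
    rw [Measure.map_apply hmeas (measurableSet_singleton x)]
    rfl
  set g : ℤ → ℝ := fun k => (k : ℝ) / m with hg
  have hginj : Function.Injective g := by
    intro a b hab
    have : (a : ℝ) = b := by
      simp only [hg] at hab; rw [div_left_inj' (ne_of_gt hmR)] at hab; exact_mod_cast hab
    exact_mod_cast this
  rw [pentropy]
  rw [← Function.Injective.tsum_eq hginj (f := fun x : ℝ =>
      ENNReal.ofReal (Real.negMulLog (((μ.map (fun ω => qz m (X ω))) {x}).toReal)))]
  · congr 1; funext k
    rw [hmap]
    have hsets : {ω | qz m (X ω) = g k} = {ω | ⌊(m : ℝ) * X ω⌋ = k} := by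
      ext ω
      simp only [Set.mem_setOf_eq, qz, hg]
      constructor
      · intro h
        have : (⌊(m:ℝ) * X ω⌋ : ℝ) = k := by
          field_simp at h; exact_mod_cast h
        exact_mod_cast this
      · intro h; rw [h]
    rw [hsets]
  · intro x hx
    rw [Function.mem_support] at hx
    by_contra hxr
    apply hx
    rw [hmap]
    have hempty : {ω | qz m (X ω) = x} = ∅ := by
      ext ω
      simp only [Set.mem_setOf_eq, Set.mem_empty_iff_false, iff_false]
      intro hq
      exact hxr ⟨⌊(m:ℝ) * X ω⌋, hq⟩
    rw [hempty]
    simp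

/-- Lemma B: grouping. -/
lemma group_measure (m : ℕ) (hm : 1 ≤ m) (hX : Measurable X) (n : ℤ) :
    μ {ω | ⌊(1 : ℝ) * X ω⌋ = n} =
      ∑ j ∈ Finset.range m, μ {ω | ⌊(m : ℝ) * X ω⌋ = m * n + j} := by
  have hmR : (0 : ℝ) < m := by exact_mod_cast hm
  have hset : {ω | ⌊(1 : ℝ) * X ω⌋ = n} =
      ⋃ j ∈ Finset.range m, {ω | ⌊(m : ℝ) * X ω⌋ = m * n + j} := by
    ext ω
    simp only [one_mul, Set.mem_setOf_eq, Set.mem_iUnion, Finset.mem_range, exists_prop]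
    constructor
    · intro h
      have h1 : (n : ℝ) ≤ X ω := by
        rw [← h]; exact Int.floor_le _
      have h2 : X ω < (n : ℝ) + 1 := by
        have h2' := Int.lt_floor_add_one (X ω)
        rw [h] at h2'; exact_mod_cast h2'
      have hl : (m : ℤ) * n ≤ ⌊(m : ℝ) * X ω⌋ := by
        apply Int.le_floor.mpr
        push_cast
        nlinarith
      have hu : ⌊(m : ℝ) * X ω⌋ < m * n + m := by
        apply Int.floor_lt.mpr
        push_cast
        nlinarith
      refine ⟨(⌊(m : ℝ) * X ω⌋ - m * n).toNat, ?_, ?_⟩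
      · omega
      · omega
    · rintro ⟨j, hj, hjf⟩
      have h1 : ((m : ℝ) * n + j : ℝ) ≤ (m : ℝ) * X ω := by
        have := Int.floor_le ((m : ℝ) * X ω)
        rw [hjf] at this; push_cast at this ⊢; linarith
      have h2 : (m : ℝ) * X ω < (m : ℝ) * n + j + 1 := by
        have := Int.lt_floor_add_one ((m : ℝ) * X ω)
        rw [hjf] at this; push_cast at this ⊢; linarith
      have hjm : (j : ℝ) + 1 ≤ m := by exact_mod_cast hj
      apply Int.floor_eq_iff.mpr
      constructor
      · show (n : ℝ) ≤ X ω
        have hj0 : (0:ℝ) ≤ j := by positivity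
        nlinarith [le_of_mul_le_mul_left (by linarith : (m:ℝ) * n ≤ m * X ω) hmR]
      · show X ω < n + 1
        nlinarith
  rw [hset]
  rw [measure_biUnion_finset ?_ (fun j _ => floorset_measurable X m _ hX)]
  intro a ha b hb hab
  simp only [Function.onFun, Set.disjoint_left]
  intro ω h1 h2
  simp only [Set.mem_setOf_eq] at h1 h2
  apply hab
  have : (m:ℤ) * n + a = m * n + b := h1 ▸ h2 ▸ rfl
  omega

/-- Lemma C: grouping bound for entropy. -/
lemma sum_negMulLog_le (m : ℕ) (hm : 1 ≤ m) (q : ℕ → ℝ) (hq : ∀ j, 0 ≤ q j) :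
    ∑ j ∈ Finset.range m, Real.negMulLog (q j) ≤
      Real.negMulLog (∑ j ∈ Finset.range m, q j) +
        (∑ j ∈ Finset.range m, q j) * Real.log m := by
  set p := ∑ j ∈ Finset.range m, q j with hp
  have hp0 : 0 ≤ p := Finset.sum_nonneg fun j _ => hq j
  rcases eq_or_lt_of_le hp0 with h0 | hppos
  · have hz : ∀ j ∈ Finset.range m, q j = 0 :=
      (Finset.sum_eq_zero_iff_of_nonneg (fun j _ => hq j)).mp h0.symm
    rw [Finset.sum_congr rfl fun j hj => by rw [hz j hj, Real.negMulLog_zero]]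
    simp [← h0]
  · have hmR : (0 : ℝ) < m := by exact_mod_cast hm
    have hterm : ∀ j ∈ Finset.range m,
        Real.negMulLog (q j) ≤ q j * (Real.log m - Real.log p) + (p / m - q j) := by
      intro j _
      rcases eq_or_lt_of_le (hq j) with hq0 | hqpos
      · rw [← hq0, Real.negMulLog_zero]
        simp only [zero_mul, zero_add, sub_zero, zero_sub]
        positivity
      · have hx : (0 : ℝ) < p / (q j * m) := by positivity
        have hlog := Real.log_le_sub_one_of_pos hx
        rw [Real.log_div (ne_of_gt hppos) (by positivity), Real.log_mul (ne_of_gt hqpos) (ne_of_gt hmR)] at hlog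
        have hmul := mul_le_mul_of_nonneg_left hlog (le_of_lt hqpos)
        have hqd : q j * (p / (q j * m) - 1) = p / m - q j := by
          field_simp
        rw [hqd] at hmul
        rw [Real.negMulLog]
        nlinarith
    calc ∑ j ∈ Finset.range m, Real.negMulLog (q j)
        ≤ ∑ j ∈ Finset.range m, (q j * (Real.log m - Real.log p) + (p / m - q j)) :=
          Finset.sum_le_sum hterm
      _ = p * (Real.log m - Real.log p) + (m * (p / m) - p) := by
          rw [Finset.sum_add_distrib, ← Finset.sum_mul, Finset.sum_sub_distrib]
          simp [← hp, mul_comm]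
      _ = Real.negMulLog p + p * Real.log m := by
          rw [Real.negMulLog]
          field_simp
          ring
end Helpers

section Key
variable {Ω : Type*} [MeasurableSpace Ω] (μ : Measure Ω) [IsProbabilityMeasure μ]
  (X : Ω → ℝ)

lemma pentropy_le (m : ℕ) (hm : 1 ≤ m) (hX : Measurable X) :
    pentropy (μ.map (fun ω => qz m (X ω))) ≤
      pentropy (μ.map (fun ω => qz 1 (X ω))) + ENNReal.ofReal (Real.log m) := by
  have hmZ : (0 : ℤ) < m := by exact_mod_cast hm
  rw [pentropy_map_eq μ X m hm hX, pentropy_map_eq μ X 1 le_rfl hX]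
  simp only [Nat.cast_one]
  set F : ℤ → ℝ≥0∞ :=
    fun k => ENNReal.ofReal (Real.negMulLog ((μ {ω | ⌊(m : ℝ) * X ω⌋ = k}).toReal)) with hF
  set g : ℤ × Fin m → ℤ := fun p => m * p.1 + (p.2 : ℤ) with hgdef
  have hginj : Function.Injective g := by
    rintro ⟨n1, j1⟩ ⟨n2, j2⟩ hab
    simp only [hgdef] at hab
    have hj1 : (0:ℤ) ≤ (j1:ℤ) ∧ (j1:ℤ) < m := ⟨Int.ofNat_nonneg _, by exact_mod_cast j1.2⟩
    have hj2 : (0:ℤ) ≤ (j2:ℤ) ∧ (j2:ℤ) < m := ⟨Int.ofNat_nonneg _, by exact_mod_cast j2.2⟩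
    have hmod : ((j1 : ℤ) + m * n1) % m = ((j2 : ℤ) + m * n2) % m := by
      rw [add_comm] at hab; rw [add_comm ((m:ℤ) * n2)] at hab; rw [hab]
    rw [Int.add_mul_emod_self_left, Int.add_mul_emod_self_left,
      Int.emod_eq_of_lt hj1.1 hj1.2, Int.emod_eq_of_lt hj2.1 hj2.2] at hmod
    have hj : j1 = j2 := by
      apply Fin.ext; exact_mod_cast hmod
    subst hj
    have hn : n1 = n2 := by
      have : (m:ℤ) * n1 = m * n2 := by omega
      exact mul_left_cancel₀ (by omega) this
    rw [hn]
  have hgsurj : Function.Surjective g := by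
    intro k
    refine ⟨⟨k / m, ⟨(k % m).toNat, ?_⟩⟩, ?_⟩
    · have h1 := Int.emod_lt_of_pos k hmZ
      have h2 := Int.emod_nonneg k (by omega : (m:ℤ) ≠ 0)
      omega
    · simp only [hgdef]
      have h2 := Int.emod_nonneg k (by omega : (m:ℤ) ≠ 0)
      have : ((k % m).toNat : ℤ) = k % m := Int.toNat_of_nonneg h2
      rw [this]
      linarith [Int.emod_def k m]
  rw [← hginj.tsum_eq (f := F) (by rw [hgsurj.range_eq]; exact Set.subset_univ _)]
  rw [ENNReal.tsum_prod']
  have hpoint : ∀ n : ℤ, (∑' j : Fin m, F (g (n, j))) ≤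
      ENNReal.ofReal (Real.negMulLog ((μ {ω | ⌊(1:ℝ) * X ω⌋ = n}).toReal)) +
        ENNReal.ofReal ((μ {ω | ⌊(1:ℝ) * X ω⌋ = n}).toReal * Real.log m) := by
    intro n
    set q : ℕ → ℝ := fun j => (μ {ω | ⌊(m : ℝ) * X ω⌋ = m * n + j}).toReal with hq
    have hq0 : ∀ j, 0 ≤ q j := fun j => ENNReal.toReal_nonneg
    have hsum : (μ {ω | ⌊(1:ℝ) * X ω⌋ = n}).toReal = ∑ j ∈ Finset.range m, q j := by
      rw [group_measure μ X m hm hX n, ENNReal.toReal_sum]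
      intro j _
      exact measure_ne_top μ _
    have h1 : (∑' j : Fin m, F (g (n, j))) =
        ENNReal.ofReal (∑ j ∈ Finset.range m, Real.negMulLog (q j)) := by
      rw [tsum_fintype]
      have hq1 : ∀ j, q j ≤ 1 := by
        intro j
        rw [hq]
        exact ENNReal.toReal_le_of_le_ofReal zero_le_one (by simpa using prob_le_one)
      rw [ENNReal.ofReal_sum_of_nonneg (fun j _ => Real.negMulLog_nonneg (hq0 j) (hq1 j))]
      rw [← Fin.sum_univ_eq_sum_range]
    rw [h1, hsum]
    calc ENNReal.ofReal (∑ j ∈ Finset.range m, Real.negMulLog (q j))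
        ≤ ENNReal.ofReal (Real.negMulLog (∑ j ∈ Finset.range m, q j) +
            (∑ j ∈ Finset.range m, q j) * Real.log m) :=
          ENNReal.ofReal_le_ofReal (sum_negMulLog_le m hm q hq0)
      _ ≤ _ := ENNReal.ofReal_add_le
  calc (∑' n : ℤ, ∑' j : Fin m, F (g (n, j)))
      ≤ ∑' n : ℤ, (ENNReal.ofReal (Real.negMulLog ((μ {ω | ⌊(1:ℝ) * X ω⌋ = n}).toReal)) +
          ENNReal.ofReal ((μ {ω | ⌊(1:ℝ) * X ω⌋ = n}).toReal * Real.log m)) :=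
        ENNReal.tsum_le_tsum hpoint
    _ = (∑' n : ℤ, ENNReal.ofReal (Real.negMulLog ((μ {ω | ⌊(1:ℝ) * X ω⌋ = n}).toReal))) +
        ∑' n : ℤ, ENNReal.ofReal ((μ {ω | ⌊(1:ℝ) * X ω⌋ = n}).toReal * Real.log m) :=
        ENNReal.tsum_add
    _ ≤ _ := by
        gcongr
        have hrw : ∀ n : ℤ, ENNReal.ofReal ((μ {ω | ⌊(1:ℝ) * X ω⌋ = n}).toReal * Real.log m) =
            μ {ω | ⌊(1:ℝ) * X ω⌋ = n} * ENNReal.ofReal (Real.log m) := by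
          intro n
          rw [ENNReal.ofReal_mul ENNReal.toReal_nonneg,
            ENNReal.ofReal_toReal (measure_ne_top μ _)]
        simp_rw [hrw]
        rw [ENNReal.tsum_mul_right]
        have hmeassum : (∑' n : ℤ, μ {ω | ⌊(1:ℝ) * X ω⌋ = n}) ≤ 1 := by
          have hmeas : ∀ n : ℤ, MeasurableSet {ω | ⌊(1:ℝ) * X ω⌋ = n} := fun n =>
            (measurable_const.mul hX).floor (measurableSet_singleton n)
          have hdisj : Pairwise (Function.onFun Disjoint
              fun n : ℤ => {ω | ⌊(1:ℝ) * X ω⌋ = n}) := by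
            intro a b hab
            simp only [Function.onFun, Set.disjoint_left]
            intro ω h1 h2
            simp only [Set.mem_setOf_eq] at h1 h2
            exact hab (h1 ▸ h2 ▸ rfl)
          have hUeq := (measure_iUnion hdisj hmeas (μ := μ)).symm
          rw [hUeq]
          exact prob_le_one
        calc (∑' n : ℤ, μ {ω | ⌊(1:ℝ) * X ω⌋ = n}) * ENNReal.ofReal (Real.log m)
            ≤ 1 * ENNReal.ofReal (Real.log m) := by gcongr
          _ = _ := one_mul _
end Key

/-- if `H([X]_1) < ∞` then `0 ≤ d̲(X) ≤ d̄(X) ≤ 1`. -/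
theorem information_dimension_between_zero_one {Ω : Type*} [MeasurableSpace Ω] (μ : Measure Ω)
    [IsProbabilityMeasure μ] (X : Ω → ℝ) (hX : Measurable X)
    (hfin : pentropy (μ.map (fun ω => qz 1 (X ω))) < ⊤) :
    0 ≤ Filter.atTop.liminf
        (fun m : ℕ => (pentropy (μ.map (fun ω => qz m (X ω)))).toReal / Real.log m) ∧
    Filter.atTop.liminf
        (fun m : ℕ => (pentropy (μ.map (fun ω => qz m (X ω)))).toReal / Real.log m) ≤
      Filter.atTop.limsup
        (fun m : ℕ => (pentropy (μ.map (fun ω => qz m (X ω)))).toReal / Real.log m) ∧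
    Filter.atTop.limsup
        (fun m : ℕ => (pentropy (μ.map (fun ω => qz m (X ω)))).toReal / Real.log m) ≤ 1 := by
  set t : ℕ → ℝ := fun m => (pentropy (μ.map (fun ω => qz m (X ω)))).toReal / Real.log m with ht
  have h0 : ∀ m, 0 ≤ t m := by
    intro m
    apply div_nonneg ENNReal.toReal_nonneg
    rcases Nat.eq_zero_or_pos m with h | h
    · simp [h]
    · exact Real.log_nonneg (by exact_mod_cast h)
  set a1 : ℝ := (pentropy (μ.map (fun ω => qz 1 (X ω)))).toReal with ha1
  have hbound : ∀ m : ℕ, 2 ≤ m → t m ≤ a1 / Real.log m + 1 := by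
    intro m hm2
    have hm1 : 1 ≤ m := le_trans one_le_two hm2
    have hkey := pentropy_le μ X m hm1 hX
    have hRne : pentropy (μ.map (fun ω => qz 1 (X ω))) + ENNReal.ofReal (Real.log m) ≠ ⊤ :=
      ENNReal.add_ne_top.mpr ⟨hfin.ne, ENNReal.ofReal_ne_top⟩
    have hto : (pentropy (μ.map (fun ω => qz m (X ω)))).toReal ≤ a1 + Real.log m := by
      have h := ENNReal.toReal_mono hRne hkey
      rwa [ENNReal.toReal_add hfin.ne ENNReal.ofReal_ne_top,
        ENNReal.toReal_ofReal (Real.log_nonneg (by exact_mod_cast hm1))] at h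
    have hlogpos : 0 < Real.log m := Real.log_pos (by exact_mod_cast hm2)
    have hstep : t m ≤ (a1 + Real.log m) / Real.log m := by
      rw [ht]
      exact div_le_div_of_nonneg_right hto hlogpos.le
    calc t m ≤ (a1 + Real.log m) / Real.log m := hstep
      _ = a1 / Real.log m + 1 := by field_simp
  set u : ℕ → ℝ := fun m => a1 / Real.log m + 1 with hu
  have hlog : Tendsto (fun m : ℕ => Real.log m) atTop atTop :=
    Real.tendsto_log_atTop.comp tendsto_natCast_atTop_atTop
  have hdiv : Tendsto (fun m : ℕ => a1 / Real.log m) atTop (𝓝 0) :=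
    tendsto_const_nhds.div_atTop hlog
  have hulim : Tendsto u atTop (𝓝 1) := by
    have := hdiv.add (tendsto_const_nhds (x := (1 : ℝ)))
    simpa using this
  have hev : t ≤ᶠ[atTop] u := eventually_atTop.mpr ⟨2, fun m hm => hbound m hm⟩
  have hubd : IsBoundedUnder (· ≤ ·) atTop u := hulim.isBoundedUnder_le
  have htbd_le : IsBoundedUnder (· ≤ ·) atTop t := hubd.mono_le hev
  have htbd_ge : IsBoundedUnder (· ≥ ·) atTop t :=
    isBoundedUnder_of ⟨0, fun m => h0 m⟩
  refine ⟨?_, ?_, ?_⟩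
  · exact le_liminf_of_le htbd_le.isCoboundedUnder_ge (Eventually.of_forall h0)
  · exact liminf_le_limsup htbd_le htbd_ge
  · calc limsup t atTop ≤ limsup u atTop :=
        limsup_le_limsup hev htbd_ge.isCoboundedUnder_le hubd
      _ = 1 := hulim.limsup_eq
end

section
/- Bussgang-type quantization bound: if X is Gaussian with mean μ and variance σ² and Z = ⌊mX⌋/m, then the correlation coefficient a₁ = E[(Z − E Z)(X − μ)]/σ² satisfies |1 − a₁| ≤ (1/m)√(2/(πσ²)). -/
open MeasureTheory ProbabilityTheory Real Filter Topology
open scoped ENNReal NNReal Classical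

section BqAux
open Set

lemma bq_exp_tendsto {b : ℝ} (hb : 0 < b) :
    Tendsto (fun x : ℝ => rexp (-b * x ^ 2)) atTop (𝓝 0) :=
  Real.tendsto_exp_atBot.comp
    ((tendsto_pow_atTop (two_ne_zero)).const_mul_atTop_of_neg (by linarith))

lemma bq_integral_Ioi_mul_exp {b : ℝ} (hb : 0 < b) :
    ∫ x in Ioi (0:ℝ), x * rexp (-b * x ^ 2) = (2*b)⁻¹ := by
  have hderiv : ∀ x ∈ Ici (0:ℝ), HasDerivAt (fun x : ℝ => -(2*b)⁻¹ * rexp (-b * x ^ 2))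
      (x * rexp (-b * x ^ 2)) x := by
    intro x _
    have h1 : HasDerivAt (fun x : ℝ => -b * x ^ 2) (-b * (2 * x)) x := by
      simpa using ((hasDerivAt_pow 2 x).const_mul (-b))
    have h2 := (h1.exp).const_mul (-(2*b)⁻¹)
    refine h2.congr_deriv ?_
    field_simp
  have htend : Tendsto (fun x : ℝ => -(2*b)⁻¹ * rexp (-b * x ^ 2)) atTop (𝓝 0) := by
    simpa using (bq_exp_tendsto hb).const_mul (-(2*b)⁻¹)
  have := integral_Ioi_of_hasDerivAt_of_tendsto' hderiv
    ((integrable_mul_exp_neg_mul_sq hb).integrableOn) htend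
  simpa using this

lemma bq_integrable_sq_mul_exp {b : ℝ} (hb : 0 < b) :
    Integrable (fun x : ℝ => x ^ 2 * rexp (-b * x ^ 2)) := by
  have h := integrable_rpow_mul_exp_neg_mul_sq hb (s := 2) (by norm_num)
  refine h.congr ?_
  filter_upwards with x
  rw [show ((2:ℝ)) = ((2:ℕ):ℝ) by norm_num, Real.rpow_natCast]

lemma bq_xexp_tendsto {b : ℝ} (hb : 0 < b) :
    Tendsto (fun x : ℝ => x * rexp (-b * x ^ 2)) atTop (𝓝 0) := by
  have h := (tendsto_rpow_abs_mul_exp_neg_mul_sq_cocompact hb 1).mono_left _root_.atTop_le_cocompact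
  refine h.congr' ?_
  filter_upwards [eventually_ge_atTop (0:ℝ)] with x hx
  rw [abs_of_nonneg hx, Real.rpow_one]

lemma bq_integral_Ioi_sq_mul_exp {b : ℝ} (hb : 0 < b) :
    ∫ x in Ioi (0:ℝ), x ^ 2 * rexp (-b * x ^ 2)
      = (2*b)⁻¹ * (Real.sqrt (π / b) / 2) := by
  have hderiv : ∀ x ∈ Ici (0:ℝ), HasDerivAt (fun x : ℝ => -(2*b)⁻¹ * (x * rexp (-b * x ^ 2)))
      (x ^ 2 * rexp (-b * x ^ 2) - (2*b)⁻¹ * rexp (-b * x ^ 2)) x := by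
    intro x _
    have h1 : HasDerivAt (fun x : ℝ => -b * x ^ 2) (-b * (2 * x)) x := by
      simpa using ((hasDerivAt_pow 2 x).const_mul (-b))
    have h2 := ((hasDerivAt_id x).mul h1.exp).const_mul (-(2*b)⁻¹)
    refine h2.congr_deriv ?_
    field_simp
    simp only [id_eq]
    ring
  have hint : IntegrableOn (fun x : ℝ => x ^ 2 * rexp (-b * x ^ 2) - (2*b)⁻¹ * rexp (-b * x ^ 2))
      (Ioi 0) :=
    ((bq_integrable_sq_mul_exp hb).sub ((integrable_exp_neg_mul_sq hb).const_mul _)).integrableOn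
  have htend : Tendsto (fun x : ℝ => -(2*b)⁻¹ * (x * rexp (-b * x ^ 2))) atTop (𝓝 0) := by
    simpa using (bq_xexp_tendsto hb).const_mul (-(2*b)⁻¹)
  have h := integral_Ioi_of_hasDerivAt_of_tendsto' hderiv hint htend
  simp only [mul_zero, zero_mul, sub_zero, Real.exp_zero] at h
  rw [integral_sub (bq_integrable_sq_mul_exp hb).integrableOn
    (((integrable_exp_neg_mul_sq hb).const_mul ((2*b)⁻¹)).integrableOn), sub_eq_zero] at h
  rw [h, integral_const_mul, integral_gaussian_Ioi]
variable {μ0 : ℝ} {v : ℝ≥0}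

lemma bq_integral_gaussianReal (hv : v ≠ 0) (g : ℝ → ℝ) :
    ∫ x, g x ∂(gaussianReal μ0 v) = ∫ x, gaussianPDFReal μ0 v x * g x := by
  rw [gaussianReal_of_var_ne_zero _ hv,
    show gaussianPDF μ0 v = fun x => ((Real.toNNReal (gaussianPDFReal μ0 v x) : ℝ≥0) : ℝ≥0∞)
      from rfl,
    integral_withDensity_eq_integral_smul (measurable_gaussianPDFReal μ0 v).real_toNNReal g]
  congr 1; ext x
  simp [NNReal.smul_def, Real.coe_toNNReal _ (gaussianPDFReal_nonneg μ0 v x)]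

lemma bq_integrable_gaussianReal (hv : v ≠ 0) {g : ℝ → ℝ}
    (hg : Integrable (fun x => gaussianPDFReal μ0 v x * g x)) :
    Integrable g (gaussianReal μ0 v) := by
  rw [gaussianReal_of_var_ne_zero _ hv,
    show gaussianPDF μ0 v = fun x => ((Real.toNNReal (gaussianPDFReal μ0 v x) : ℝ≥0) : ℝ≥0∞)
      from rfl,
    integrable_withDensity_iff_integrable_coe_smul
      (measurable_gaussianPDFReal μ0 v).real_toNNReal]
  refine hg.congr ?_
  filter_upwards with x
  simp [smul_eq_mul, Real.coe_toNNReal _ (gaussianPDFReal_nonneg μ0 v x)]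

lemma bq_pdf0 (y : ℝ) :
    gaussianPDFReal 0 v y = (Real.sqrt (2*π*(v:ℝ)))⁻¹ * rexp (-(2*(v:ℝ))⁻¹ * y^2) := by
  rw [gaussianPDFReal]
  congr 1
  rw [sub_zero, neg_div, div_eq_mul_inv, neg_mul, mul_comm]

lemma bq_integrable_central (hv : v ≠ 0) {g : ℝ → ℝ}
    (hg : Integrable (fun y => gaussianPDFReal 0 v y * g y)) :
    Integrable (fun x => g (x - μ0)) (gaussianReal μ0 v) := by
  refine bq_integrable_gaussianReal hv ?_
  refine (hg.comp_sub_right μ0).congr ?_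
  filter_upwards with x
  simp only [gaussianPDFReal_sub, zero_add]

lemma bq_integral_central (hv : v ≠ 0) (g : ℝ → ℝ) :
    ∫ x, g (x - μ0) ∂(gaussianReal μ0 v) = ∫ y, gaussianPDFReal 0 v y * g y := by
  rw [bq_integral_gaussianReal hv,
    ← integral_add_right_eq_self (fun x => gaussianPDFReal μ0 v x * g (x - μ0)) μ0]
  congr 1; ext y
  rw [gaussianPDFReal_add, sub_self, add_sub_cancel_right]

lemma bq_moment1 (hv : v ≠ 0) : ∫ x, (x - μ0) ∂(gaussianReal μ0 v) = 0 := by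
  rw [bq_integral_central hv (fun y => y)]
  have h := integral_neg_eq_self (fun y : ℝ => gaussianPDFReal 0 v y * y) volume
  have heq : ∀ y : ℝ, gaussianPDFReal 0 v (-y) * (-y) = -(gaussianPDFReal 0 v y * y) := by
    intro y
    rw [bq_pdf0, bq_pdf0, neg_sq]
    ring
  simp only [heq, integral_neg] at h
  linarith

lemma bq_moment2 (hv : 0 < v) : ∫ x, (x - μ0)^2 ∂(gaussianReal μ0 v) = (v : ℝ) := by
  have hsv : (0:ℝ) < v := hv
  have hb : (0:ℝ) < (2*(v:ℝ))⁻¹ := by positivity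
  have hne : Real.sqrt (2*π*(v:ℝ)) ≠ 0 := by positivity
  have h2 : ((2:ℝ)*(2*(v:ℝ))⁻¹)⁻¹ = (v:ℝ) := by field_simp
  have h3 : π / (2*(v:ℝ))⁻¹ = 2*π*(v:ℝ) := by field_simp
  rw [bq_integral_central hv.ne' (fun y => y^2)]
  calc ∫ y : ℝ, gaussianPDFReal 0 v y * y^2
      = ∫ y : ℝ, (Real.sqrt (2*π*(v:ℝ)))⁻¹ *
          ((fun t => t^2 * rexp (-(2*(v:ℝ))⁻¹ * t^2)) |y|) := by
        congr 1; ext y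
        rw [bq_pdf0]
        simp only [sq_abs]
        ring
    _ = (Real.sqrt (2*π*(v:ℝ)))⁻¹ *
          ∫ y : ℝ, (fun t => t^2 * rexp (-(2*(v:ℝ))⁻¹ * t^2)) |y| := integral_const_mul _ _
    _ = (Real.sqrt (2*π*(v:ℝ)))⁻¹ *
          (2 * (((2:ℝ)*(2*(v:ℝ))⁻¹)⁻¹ * (Real.sqrt (π/(2*(v:ℝ))⁻¹)/2))) := by
        rw [integral_comp_abs (f := fun t => t^2 * rexp (-(2*(v:ℝ))⁻¹ * t^2)),
          bq_integral_Ioi_sq_mul_exp hb]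
    _ = (v:ℝ) := by
        rw [h2, h3]
        rw [show (Real.sqrt (2*π*(v:ℝ)))⁻¹ * (2 * ((v:ℝ) * (Real.sqrt (2*π*(v:ℝ))/2)))
            = (v:ℝ) * ((Real.sqrt (2*π*(v:ℝ)))⁻¹ * Real.sqrt (2*π*(v:ℝ))) by ring,
          inv_mul_cancel₀ hne, mul_one]

lemma bq_momentabs (hv : 0 < v) :
    ∫ x, |x - μ0| ∂(gaussianReal μ0 v) = Real.sqrt (2*(v:ℝ)/π) := by
  have hsv : (0:ℝ) < v := hv
  have hb : (0:ℝ) < (2*(v:ℝ))⁻¹ := by positivity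
  have hne : Real.sqrt (2*π*(v:ℝ)) ≠ 0 := by positivity
  have h2 : Real.sqrt (2*π*(v:ℝ)) * Real.sqrt (2*(v:ℝ)/π) = 2*(v:ℝ) := by
    rw [← Real.sqrt_mul (by positivity)]
    rw [show (2*π*(v:ℝ)) * (2*(v:ℝ)/π) = (2*(v:ℝ))^2 by field_simp]
    exact Real.sqrt_sq (by positivity)
  have h3 : ((2:ℝ)*(2*(v:ℝ))⁻¹)⁻¹ = (v:ℝ) := by field_simp
  rw [bq_integral_central hv.ne' (fun y => |y|)]
  calc ∫ y : ℝ, gaussianPDFReal 0 v y * |y|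
      = ∫ y : ℝ, (Real.sqrt (2*π*(v:ℝ)))⁻¹ *
          ((fun t => t * rexp (-(2*(v:ℝ))⁻¹ * t^2)) |y|) := by
        congr 1; ext y
        rw [bq_pdf0]
        simp only [sq_abs]
        ring
    _ = (Real.sqrt (2*π*(v:ℝ)))⁻¹ *
          ∫ y : ℝ, (fun t => t * rexp (-(2*(v:ℝ))⁻¹ * t^2)) |y| := integral_const_mul _ _
    _ = (Real.sqrt (2*π*(v:ℝ)))⁻¹ * (2 * ((2:ℝ)*(2*(v:ℝ))⁻¹)⁻¹) := by
        rw [integral_comp_abs (f := fun t => t * rexp (-(2*(v:ℝ))⁻¹ * t^2)),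
          bq_integral_Ioi_mul_exp hb]
    _ = Real.sqrt (2*(v:ℝ)/π) := by
        rw [h3, inv_mul_eq_iff_eq_mul₀ hne]
        exact h2.symm

lemma bq_int1 (hv : 0 < v) : Integrable (fun x => x - μ0) (gaussianReal μ0 v) := by
  have hb : (0:ℝ) < (2*(v:ℝ))⁻¹ := by positivity
  refine bq_integrable_central hv.ne' (g := fun y => y) ?_
  have := (integrable_mul_exp_neg_mul_sq hb).const_mul (Real.sqrt (2*π*(v:ℝ)))⁻¹
  refine this.congr ?_
  filter_upwards with y
  rw [bq_pdf0]
  ring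

lemma bq_int2 (hv : 0 < v) : Integrable (fun x => (x - μ0)^2) (gaussianReal μ0 v) := by
  have hb : (0:ℝ) < (2*(v:ℝ))⁻¹ := by positivity
  refine bq_integrable_central hv.ne' (g := fun y => y^2) ?_
  have := (bq_integrable_sq_mul_exp hb).const_mul (Real.sqrt (2*π*(v:ℝ)))⁻¹
  refine this.congr ?_
  filter_upwards with y
  rw [bq_pdf0]
  ring

lemma bq_intabs (hv : 0 < v) : Integrable (fun x => |x - μ0|) (gaussianReal μ0 v) := by
  have h := (bq_int1 (μ0 := μ0) hv).abs
  exact h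

end BqAux

/-- Bussgang-type bound `|1 - a₁| ≤ (1/m)√(2/(πσ²))` for the quantization
of a Gaussian random variable. -/
theorem bussgang_quantization_bound {Ω : Type*} [MeasurableSpace Ω] (μ : Measure Ω)
    [IsProbabilityMeasure μ] (X : Ω → ℝ) (hX : Measurable X) (μ0 : ℝ) (v : ℝ≥0)
    (hv : 0 < v) (hgauss : μ.map X = gaussianReal μ0 v) (m : ℕ) (hm : 1 ≤ m) :
    |1 - (∫ ω, (qz m (X ω) - ∫ ω', qz m (X ω') ∂μ) * (X ω - μ0) ∂μ) / (v : ℝ)| ≤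
      (1 / m) * Real.sqrt (2 / (Real.pi * (v : ℝ))) := by
  have hsv : (0:ℝ) < v := hv
  have hm' : (0:ℝ) < m := by exact_mod_cast Nat.lt_of_lt_of_le Nat.zero_lt_one hm
  have hqzm : Measurable (qz m) :=
    ((measurable_from_top (f := (Int.cast : ℤ → ℝ))).comp
      ((measurable_const.mul measurable_id).floor)).div_const _
  have hc : ∫ ω', qz m (X ω') ∂μ = ∫ x, qz m x ∂(gaussianReal μ0 v) := by
    rw [← hgauss, integral_map hX.aemeasurable hqzm.aestronglyMeasurable]
  set c := ∫ x, qz m x ∂(gaussianReal μ0 v) with hcdef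
  rw [hc]
  have hgm : Measurable fun x => (qz m x - c) * (x - μ0) :=
    (hqzm.sub measurable_const).mul (measurable_id.sub measurable_const)
  have hI : ∫ ω, (qz m (X ω) - c) * (X ω - μ0) ∂μ
      = ∫ x, (qz m x - c) * (x - μ0) ∂(gaussianReal μ0 v) := by
    rw [← hgauss, integral_map hX.aemeasurable hgm.aestronglyMeasurable]
  rw [hI]
  have hebound : ∀ x : ℝ, |x - qz m x| ≤ 1/m := by
    intro x
    have h1 : (⌊(m:ℝ)*x⌋ : ℝ) ≤ (m:ℝ)*x := Int.floor_le _
    have h2 : (m:ℝ)*x < (⌊(m:ℝ)*x⌋ : ℝ) + 1 := Int.lt_floor_add_one _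
    have hA : (⌊(m:ℝ)*x⌋ : ℝ)/m ≤ x := by
      rw [div_le_iff₀ hm']; exact h1.trans_eq (mul_comm _ _)
    have hB : x ≤ ((⌊(m:ℝ)*x⌋ : ℝ) + 1)/m := by
      rw [le_div_iff₀ hm']; exact (mul_comm x ((m:ℕ):ℝ)).trans_le h2.le
    rw [add_div] at hB
    have hmpos : (0:ℝ) < 1/m := by positivity
    rw [abs_le, qz]
    constructor <;> [linarith; linarith]
  have hprodm : Measurable fun x : ℝ => (x - qz m x) * (x - μ0) :=
    ((measurable_id.sub hqzm).mul (measurable_id.sub measurable_const))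
  have hinte : Integrable (fun x => (x - qz m x) * (x - μ0)) (gaussianReal μ0 v) := by
    refine Integrable.mono' ((bq_intabs hv).const_mul (1/m)) hprodm.aestronglyMeasurable ?_
    filter_upwards with x
    rw [Real.norm_eq_abs, abs_mul]
    exact mul_le_mul_of_nonneg_right (hebound x) (abs_nonneg _)
  have hsplit : (fun x : ℝ => (qz m x - c) * (x - μ0))
      = fun x => ((x - μ0)^2 + (μ0 - c) * (x - μ0)) - (x - qz m x) * (x - μ0) := by
    funext x; ring
  have hintsum : Integrable (fun x : ℝ => (x - μ0)^2 + (μ0 - c) * (x - μ0)) (gaussianReal μ0 v) :=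
    (bq_int2 hv).add ((bq_int1 hv).const_mul _)
  have hval : ∫ x, (qz m x - c) * (x - μ0) ∂(gaussianReal μ0 v)
      = (v:ℝ) - ∫ x, (x - qz m x) * (x - μ0) ∂(gaussianReal μ0 v) := by
    rw [hsplit, integral_sub hintsum hinte, integral_add (bq_int2 hv) ((bq_int1 hv).const_mul _),
      integral_const_mul, bq_moment1 hv.ne', bq_moment2 hv, mul_zero, add_zero]
  rw [hval]
  set E := ∫ x, (x - qz m x) * (x - μ0) ∂(gaussianReal μ0 v) with hE
  have hEbound : |E| ≤ (1/m) * Real.sqrt (2*(v:ℝ)/π) := by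
    have h0 : |E| ≤ ∫ x, |(x - qz m x) * (x - μ0)| ∂(gaussianReal μ0 v) := by
      rw [hE]
      simpa only [Real.norm_eq_abs] using norm_integral_le_integral_norm
        (μ := gaussianReal μ0 v) (fun x => (x - qz m x) * (x - μ0))
    calc |E| ≤ ∫ x, |(x - qz m x) * (x - μ0)| ∂(gaussianReal μ0 v) := h0
      _ ≤ ∫ x, (1/m) * |x - μ0| ∂(gaussianReal μ0 v) := by
          refine integral_mono hinte.abs ((bq_intabs hv).const_mul _) ?_
          intro x
          dsimp only
          rw [abs_mul]
          exact mul_le_mul_of_nonneg_right (hebound x) (abs_nonneg _)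
      _ = (1/m) * Real.sqrt (2*(v:ℝ)/π) := by rw [integral_const_mul, bq_momentabs hv]
  have hsqrt : Real.sqrt (2*(v:ℝ)/π) = Real.sqrt (2/(π*(v:ℝ))) * (v:ℝ) := by
    rw [show 2*(v:ℝ)/π = (2/(π*(v:ℝ))) * (v:ℝ)^2 by field_simp,
      Real.sqrt_mul (by positivity), Real.sqrt_sq hsv.le]
  have hgoal : 1 - ((v:ℝ) - E)/(v:ℝ) = E/(v:ℝ) := by field_simp; ring
  rw [hgoal, abs_div, abs_of_pos hsv, div_le_iff₀ hsv]
  calc |E| ≤ (1/m) * Real.sqrt (2*(v:ℝ)/π) := hEbound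
    _ = (1/m) * Real.sqrt (2/(π*(v:ℝ))) * (v:ℝ) := by rw [hsqrt]; ring
end
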